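/- arXiv:1809.06599 — 3 statements merged into one kernel-verified Lean document; each statement's English description precedes it below -/
import Mathlib

section
/- There exists an absolute constant c > 0 such that for every family (B_n)_{n ∈ ℤ∖{0}} of nonnegative real numbers with Σ_{n∈ℤ∖{0}} B_n < ∞, one has ∫₀¹ (1 + Σ_{n∈ℤ∖{0}} B_n sin²(πnt)) · exp(−Σ_{n∈ℤ∖{0}} B_n sin²(πnt)) dt ≤ c/√(1 + Σ_{n∈ℤ∖{0}} B_n). -/
open MeasureTheory Real Set


lemma aux_pt {x : ℝ} (hx : 0 ≤ x) : (1 + x) * Real.exp (-x) ≤ 2 * Real.exp (-(x/2)) := by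
  have h := Real.add_one_le_exp (x/2)
  have h2 : (1:ℝ) + x ≤ 2 * Real.exp (x/2) := by nlinarith
  calc (1+x) * Real.exp (-x) ≤ 2 * Real.exp (x/2) * Real.exp (-x) :=
        mul_le_mul_of_nonneg_right h2 (Real.exp_nonneg _)
  _ = 2 * Real.exp (-(x/2)) := by rw [mul_assoc, ← Real.exp_add]; ring_nf

lemma aux_pt1 {x : ℝ} (hx : 0 ≤ x) : (1 + x) * Real.exp (-x) ≤ 1 := by
  have h := Real.add_one_le_exp x
  have h2 : Real.exp (-x) * Real.exp x = 1 := by rw [← Real.exp_add]; simp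
  nlinarith [Real.exp_nonneg (-x)]

lemma jensen_exp {ι : Type*} [Countable ι] (w y : ι → ℝ) (hw : ∀ i, 0 ≤ w i)
    (hy : ∀ i, 0 ≤ y i) (hws : Summable w) (hw1 : ∑' i, w i = 1)
    (hs : Summable fun i => w i * y i) :
    Real.exp (-(∑' i, w i * y i)) ≤ ∑' i, w i * Real.exp (-(y i)) := by
  set m := ∑' i, w i * y i with hm
  have key : ∀ i, Real.exp (-m) * ((1 + m) * w i - w i * y i) ≤ w i * Real.exp (-(y i)) := by
    intro i
    have h1 : 1 + (m - y i) ≤ Real.exp (m - y i) := by linarith [Real.add_one_le_exp (m - y i)]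
    have h3 : Real.exp (-(y i)) = Real.exp (-m) * Real.exp (m - y i) := by
      rw [← Real.exp_add]; ring_nf
    have h4 : Real.exp (-m) * (1 + (m - y i)) ≤ Real.exp (-m) * Real.exp (m - y i) :=
      mul_le_mul_of_nonneg_left h1 (Real.exp_nonneg _)
    have h5 : Real.exp (-m) * (1 + (m - y i)) ≤ Real.exp (-(y i)) := by rw [h3]; exact h4
    have h6 : Real.exp (-m) * ((1 + m) * w i - w i * y i)
        = w i * (Real.exp (-m) * (1 + (m - y i))) := by ring
    rw [h6]
    exact mul_le_mul_of_nonneg_left h5 (hw i)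
  have hsum1 : Summable fun i => Real.exp (-m) * ((1 + m) * w i - w i * y i) :=
    ((hws.mul_left _).sub hs).mul_left _
  have hsum2 : Summable fun i => w i * Real.exp (-(y i)) := by
    apply Summable.of_nonneg_of_le (fun i => mul_nonneg (hw i) (Real.exp_nonneg _)) _ hws
    intro i
    calc w i * Real.exp (-(y i)) ≤ w i * 1 := by
          refine mul_le_mul_of_nonneg_left ?_ (hw i)
          rw [Real.exp_le_one_iff]; linarith [hy i]
    _ = w i := mul_one _
  have hT := Summable.tsum_le_tsum key hsum1 hsum2
  have hL : ∑' i, Real.exp (-m) * ((1 + m) * w i - w i * y i) = Real.exp (-m) := by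
    rw [tsum_mul_left, Summable.tsum_sub (hws.mul_left _) hs, tsum_mul_left, hw1, hm]
    ring
  linarith [hT, hL.symm.le]

lemma gauss_bound {l : ℝ} (hl : 0 ≤ l) :
    (∫ t in (0:ℝ)..1, Real.exp (-(l * Real.sin (Real.pi * t)^2)))
      ≤ 2 / Real.sqrt (1 + l) := by
  have h1l : (0:ℝ) < 1 + l := by linarith
  have hsq : 0 < Real.sqrt (1 + l) := Real.sqrt_pos.2 h1l
  have hcont : Continuous fun t : ℝ => Real.exp (-(l * Real.sin (Real.pi * t)^2)) := by
    continuity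
  rcases le_or_gt l 1 with hc | hc
  · -- small l : bound by 1
    have hb : (∫ t in (0:ℝ)..1, Real.exp (-(l * Real.sin (Real.pi * t)^2)))
        ≤ ∫ t in (0:ℝ)..1, (1:ℝ) := by
      apply intervalIntegral.integral_mono_on zero_le_one
        (hcont.intervalIntegrable _ _) (intervalIntegrable_const)
      intro t _
      rw [Real.exp_le_one_iff]
      have : 0 ≤ l * Real.sin (Real.pi * t)^2 := mul_nonneg hl (sq_nonneg _)
      linarith
    have h2 : Real.sqrt (1 + l) ≤ 2 := by
      rw [show (2:ℝ) = Real.sqrt 4 by rw [show (4:ℝ) = 2^2 by norm_num, Real.sqrt_sq]; norm_num]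
      exact Real.sqrt_le_sqrt (by linarith)
    have h3 : (1:ℝ) ≤ 2 / Real.sqrt (1 + l) := (one_le_div hsq).2 h2
    have hb1 : (∫ t in (0:ℝ)..1, (1:ℝ)) = 1 := by simp
    linarith
  · -- large l : Gaussian bound
    have h4l : (0:ℝ) < 4 * l := by linarith
    set f : ℝ → ℝ := fun x => Real.exp (-(4*l) * x^2) with hf
    have hfc : Continuous f := by continuity
    have hpt : ∀ t ∈ Icc (0:ℝ) 1,
        Real.exp (-(l * Real.sin (Real.pi * t)^2)) ≤ f t + f (1 - t) := by
      intro t ht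
      obtain ⟨ht0, ht1⟩ := ht
      rcases le_total t (1/2) with h | h
      · have hsin : 2 * t ≤ Real.sin (Real.pi * t) := by
          have := Real.mul_le_sin (x := Real.pi * t)
            (mul_nonneg Real.pi_pos.le ht0) (by nlinarith [Real.pi_pos])
          calc 2 * t = 2 / Real.pi * (Real.pi * t) := by
                field_simp
          _ ≤ Real.sin (Real.pi * t) := this
        have hsq2 : 4 * t^2 ≤ Real.sin (Real.pi * t)^2 := by nlinarith
        have : Real.exp (-(l * Real.sin (Real.pi * t)^2)) ≤ f t := by
          rw [hf]; apply Real.exp_le_exp.2; nlinarith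
        have h2 : 0 ≤ f (1 - t) := Real.exp_nonneg _
        linarith
      · have hsin : 2 * (1 - t) ≤ Real.sin (Real.pi * t) := by
          have heq : Real.sin (Real.pi * t) = Real.sin (Real.pi * (1 - t)) := by
            rw [show Real.pi * (1 - t) = Real.pi - Real.pi * t by ring, Real.sin_pi_sub]
          have := Real.mul_le_sin (x := Real.pi * (1 - t))
            (mul_nonneg Real.pi_pos.le (by linarith)) (by nlinarith [Real.pi_pos])
          rw [heq]
          calc 2 * (1 - t) = 2 / Real.pi * (Real.pi * (1 - t)) := by field_simp
          _ ≤ _ := this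
        have hsq2 : 4 * (1-t)^2 ≤ Real.sin (Real.pi * t)^2 := by
          have h0 : 0 ≤ 2 * (1 - t) := by linarith
          nlinarith
        have : Real.exp (-(l * Real.sin (Real.pi * t)^2)) ≤ f (1 - t) := by
          rw [hf]; apply Real.exp_le_exp.2; nlinarith
        have h2 : 0 ≤ f t := Real.exp_nonneg _
        linarith
    have hIb : (∫ t in (0:ℝ)..1, Real.exp (-(l * Real.sin (Real.pi * t)^2)))
        ≤ ∫ t in (0:ℝ)..1, (f t + f (1 - t)) := by
      apply intervalIntegral.integral_mono_on zero_le_one (hcont.intervalIntegrable _ _)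
        ((hfc.add (hfc.comp (by continuity))).intervalIntegrable _ _) hpt
    have hsplit : (∫ t in (0:ℝ)..1, (f t + f (1 - t)))
        = (∫ t in (0:ℝ)..1, f t) + ∫ t in (0:ℝ)..1, f (1 - t) :=
      intervalIntegral.integral_add (hfc.intervalIntegrable _ _)
        ((hfc.comp (by continuity)).intervalIntegrable _ _)
    have hswap : (∫ t in (0:ℝ)..1, f (1 - t)) = ∫ t in (0:ℝ)..1, f t := by
      simpa using intervalIntegral.integral_comp_sub_left f 1
    have hgauss : (∫ t in (0:ℝ)..1, f t) ≤ Real.sqrt (Real.pi / (4*l)) / 2 := by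
      rw [intervalIntegral.integral_of_le zero_le_one]
      calc (∫ t in Ioc (0:ℝ) 1, f t)
          ≤ ∫ t in Ioi (0:ℝ), f t := by
            apply setIntegral_mono_set (integrable_exp_neg_mul_sq h4l).integrableOn
              (Filter.Eventually.of_forall fun x => Real.exp_nonneg _)
            exact (Ioc_subset_Ioi_self).eventuallyLE
      _ = Real.sqrt (Real.pi / (4*l)) / 2 := integral_gaussian_Ioi (4*l)
    have hfinal : Real.sqrt (Real.pi / (4*l)) ≤ 2 / Real.sqrt (1 + l) := by
      have h1 : Real.pi / (4*l) ≤ 4 / (1 + l) := by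
        rw [div_le_div_iff₀ h4l h1l]
        nlinarith [Real.pi_le_four]
      calc Real.sqrt (Real.pi / (4*l)) ≤ Real.sqrt (4 / (1+l)) := Real.sqrt_le_sqrt h1
      _ = 2 / Real.sqrt (1+l) := by
          rw [Real.sqrt_div (by norm_num : (0:ℝ) ≤ 4),
            show (4:ℝ) = 2^2 by norm_num, Real.sqrt_sq (by norm_num : (0:ℝ) ≤ 2)]
    linarith [hIb, hsplit, hswap, hgauss]

lemma freq_nat (l : ℝ) (k : ℕ) (hk : k ≠ 0) :
    (∫ t in (0:ℝ)..1, Real.exp (-(l * Real.sin (Real.pi * ((k:ℝ) * t))^2)))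
      = ∫ t in (0:ℝ)..1, Real.exp (-(l * Real.sin (Real.pi * t)^2)) := by
  set g : ℝ → ℝ := fun t => Real.exp (-(l * Real.sin (Real.pi * t)^2)) with hg
  have hgc : Continuous g := by continuity
  have hper : Function.Periodic g 1 := by
    intro t
    simp only [hg, mul_add, mul_one, Real.sin_add_pi, neg_sq]
  have hint : ∀ t₁ t₂, IntervalIntegrable g MeasureSpace.volume t₁ t₂ :=
    fun a b => hgc.intervalIntegrable a b
  have h1 : (∫ t in (0:ℝ)..1, g ((k:ℝ) * t)) = ((k:ℝ))⁻¹ • ∫ x in ((k:ℝ)*0)..((k:ℝ)*1), g x :=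
    intervalIntegral.integral_comp_mul_left g (by exact_mod_cast hk)
  have h2 : (∫ x in (0:ℝ)..(0 + (k:ℤ) • (1:ℝ)), g x) = (k:ℤ) • ∫ x in (0:ℝ)..(0+1), g x :=
    hper.intervalIntegral_add_zsmul_eq (k:ℤ) 0 hint
  have h3 : ((k:ℝ)*0 : ℝ) = 0 := by ring
  have h4 : ((k:ℝ)*1 : ℝ) = (0 + (k:ℤ) • (1:ℝ)) := by simp
  rw [show (∫ t in (0:ℝ)..1, Real.exp (-(l * Real.sin (Real.pi * ((k:ℝ) * t))^2)))
      = ∫ t in (0:ℝ)..1, g ((k:ℝ) * t) from rfl, h1, h3, h4, h2]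
  simp only [zero_add, zsmul_eq_mul, smul_eq_mul]
  rw [show ((k:ℤ):ℝ) = (k:ℝ) by norm_cast, ← mul_assoc,
    inv_mul_cancel₀ (by exact_mod_cast hk : ((k:ℝ)) ≠ 0), one_mul]

lemma freq_eq (l : ℝ) (n : ℤ) (hn : n ≠ 0) :
    (∫ t in (0:ℝ)..1, Real.exp (-(l * Real.sin (Real.pi * (n:ℝ) * t)^2)))
      = ∫ t in (0:ℝ)..1, Real.exp (-(l * Real.sin (Real.pi * t)^2)) := by
  have key : ∀ t : ℝ, Real.sin (Real.pi * (n:ℝ) * t)^2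
      = Real.sin (Real.pi * ((n.natAbs : ℝ) * t))^2 := by
    intro t
    rcases le_or_gt 0 n with h | h
    · have : (n.natAbs : ℝ) = (n : ℝ) := by
        rw [Nat.cast_natAbs]; exact_mod_cast abs_of_nonneg h
      rw [this, mul_assoc]
    · have : (n.natAbs : ℝ) = -(n : ℝ) := by
        rw [Nat.cast_natAbs]; exact_mod_cast abs_of_nonpos h.le
      rw [this, show Real.pi * (-(n:ℝ) * t) = -(Real.pi * (n:ℝ) * t) by ring,
        Real.sin_neg, neg_sq]
  simp_rw [key]
  exact freq_nat l n.natAbs (Int.natAbs_ne_zero.2 hn)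

/-- There exists an absolute constant `c > 0` such that for every family `(B n)_{n ∈ ℤ \ {0}}`
of nonnegative reals with `∑_{n ≠ 0} B n < ∞`,
`∫₀¹ (1 + ∑_{n≠0} B n · sin²(πnt)) · exp(−∑_{n≠0} B n · sin²(πnt)) dt
  ≤ c / √(1 + ∑_{n≠0} B n)`. -/
theorem statement1 :
    ∃ c : ℝ, 0 < c ∧ ∀ B : ℤ → ℝ,
      (∀ n : ℤ, n ≠ 0 → 0 ≤ B n) →
      Summable (fun n : {n : ℤ // n ≠ 0} => B n.val) →
      (∫ t in (0:ℝ)..1,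
        (1 + ∑' n : {n : ℤ // n ≠ 0}, B n.val * Real.sin (Real.pi * n.val * t) ^ 2) *
          Real.exp (-(∑' n : {n : ℤ // n ≠ 0}, B n.val * Real.sin (Real.pi * n.val * t) ^ 2))) ≤
        c / Real.sqrt (1 + ∑' n : {n : ℤ // n ≠ 0}, B n.val) := by
  refine ⟨6, by norm_num, fun B hB hsum => ?_⟩
  set ι := {n : ℤ // n ≠ 0}
  have hBn : ∀ n : ι, 0 ≤ B n.val := fun n => hB n.val n.prop
  set Bt := ∑' n : ι, B n.val with hBt
  have hBt0 : 0 ≤ Bt := tsum_nonneg hBn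
  set S : ℝ → ℝ := fun t => ∑' n : ι, B n.val * Real.sin (Real.pi * n.val * t) ^ 2 with hS
  have hterm_nonneg : ∀ (t : ℝ) (n : ι), 0 ≤ B n.val * Real.sin (Real.pi * n.val * t) ^ 2 :=
    fun t n => mul_nonneg (hBn n) (sq_nonneg _)
  have hterm_le : ∀ (t : ℝ) (n : ι), B n.val * Real.sin (Real.pi * n.val * t) ^ 2 ≤ B n.val := by
    intro t n
    have h1 : Real.sin (Real.pi * n.val * t) ^ 2 ≤ 1 := Real.sin_sq_le_one _
    nlinarith [hBn n]
  have hSsum : ∀ t : ℝ, Summable fun n : ι => B n.val * Real.sin (Real.pi * n.val * t) ^ 2 :=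
    fun t => Summable.of_nonneg_of_le (hterm_nonneg t) (hterm_le t) hsum
  have hSnn : ∀ t, 0 ≤ S t := fun t => tsum_nonneg (hterm_nonneg t)
  rcases eq_or_lt_of_le hBt0 with hz | hpos
  · -- all B n = 0
    have hzero : ∀ n : ι, B n.val = 0 := by
      intro n
      have h1 : B n.val ≤ Bt := Summable.le_tsum hsum n (fun j _ => hBn j)
      exact le_antisymm (by rw [← hz] at h1; exact h1) (hBn n)
    have hS0 : ∀ t, S t = 0 := by
      intro t
      rw [hS]
      exact (tsum_congr (fun n => by rw [hzero n, zero_mul])).trans tsum_zero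
    have : (∫ t in (0:ℝ)..1,
        (1 + ∑' n : ι, B n.val * Real.sin (Real.pi * n.val * t) ^ 2) *
          Real.exp (-(∑' n : ι, B n.val * Real.sin (Real.pi * n.val * t) ^ 2))) = 1 := by
      have heq : ∀ t : ℝ, (1 + ∑' n : ι, B n.val * Real.sin (Real.pi * n.val * t) ^ 2) *
          Real.exp (-(∑' n : ι, B n.val * Real.sin (Real.pi * n.val * t) ^ 2)) = 1 := by
        intro t
        have h0 : (∑' n : ι, B n.val * Real.sin (Real.pi * n.val * t) ^ 2) = 0 := hS0 t
        rw [h0]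
        simp
      rw [intervalIntegral.integral_congr (fun t _ => heq t)]
      simp
    rw [this, ← hz]
    rw [show (1:ℝ) + 0 = 1 by ring, Real.sqrt_one]
    norm_num
  · -- main case
    set l := Bt / 2 with hl
    have hlnn : 0 ≤ l := by positivity
    set w : ι → ℝ := fun n => B n.val / Bt with hw
    have hwnn : ∀ n, 0 ≤ w n := fun n => div_nonneg (hBn n) hBt0
    have hws : Summable w := hsum.div_const _
    have hw1 : ∑' n, w n = 1 := by
      rw [hw]
      simp only
      rw [tsum_div_const, ← hBt, div_self (ne_of_gt hpos)]
    set G : ℝ → ℝ := fun t => ∑' n : ι, w n * Real.exp (-(l * Real.sin (Real.pi * n.val * t) ^ 2))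
      with hG
    have hGterm_nonneg : ∀ (t : ℝ) (n : ι),
        0 ≤ w n * Real.exp (-(l * Real.sin (Real.pi * n.val * t) ^ 2)) :=
      fun t n => mul_nonneg (hwnn n) (Real.exp_nonneg _)
    have hGterm_le : ∀ (t : ℝ) (n : ι),
        w n * Real.exp (-(l * Real.sin (Real.pi * n.val * t) ^ 2)) ≤ w n := by
      intro t n
      have : Real.exp (-(l * Real.sin (Real.pi * n.val * t) ^ 2)) ≤ 1 := by
        rw [Real.exp_le_one_iff]
        have := mul_nonneg hlnn (sq_nonneg (Real.sin (Real.pi * n.val * t)))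
        linarith
      nlinarith [hwnn n]
    have hGsum : ∀ t : ℝ, Summable fun n : ι =>
        w n * Real.exp (-(l * Real.sin (Real.pi * n.val * t) ^ 2)) :=
      fun t => Summable.of_nonneg_of_le (hGterm_nonneg t) (hGterm_le t) hws
    -- pointwise bound
    have hpt : ∀ t : ℝ, (1 + S t) * Real.exp (-(S t)) ≤ 2 * G t := by
      intro t
      have step1 := aux_pt (hSnn t)
      have heq : S t / 2 = ∑' n : ι, w n * (l * Real.sin (Real.pi * n.val * t) ^ 2) := by
        rw [hS]
        simp only
        rw [← tsum_div_const]
        apply tsum_congr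
        intro n
        rw [hw, hl]
        field_simp
      have step2 : Real.exp (-(S t / 2)) ≤ G t := by
        rw [heq, hG]
        apply jensen_exp w _ hwnn (fun n => mul_nonneg hlnn (sq_nonneg _)) hws hw1
        · apply Summable.congr ((hSsum t).div_const 2)
          intro n
          rw [hw, hl]
          field_simp
      calc (1 + S t) * Real.exp (-(S t)) ≤ 2 * Real.exp (-(S t / 2)) := step1
      _ ≤ 2 * G t := by linarith
    -- G bounds
    have hGnn : ∀ t, 0 ≤ G t := fun t => tsum_nonneg (hGterm_nonneg t)
    have hGle1 : ∀ t, G t ≤ 1 := by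
      intro t
      calc G t ≤ ∑' n : ι, w n := Summable.tsum_le_tsum (hGterm_le t) (hGsum t) hws
      _ = 1 := hw1
    -- measurability
    have hmeasS : Measurable S := by
      have hrepr : S = fun t =>
          (∑' n : ι, ENNReal.ofReal (B n.val * Real.sin (Real.pi * n.val * t) ^ 2)).toReal := by
        funext t
        rw [← ENNReal.ofReal_tsum_of_nonneg (hterm_nonneg t) (hSsum t),
          ENNReal.toReal_ofReal (hSnn t)]
      rw [hrepr]
      apply ENNReal.measurable_toReal.comp
      apply Measurable.ennreal_tsum
      intro n
      apply Measurable.ennreal_ofReal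
      exact (continuous_const.mul ((Real.continuous_sin.comp
        ((continuous_const.mul continuous_id))).pow 2)).measurable
    have hmeasG : Measurable G := by
      have hrepr : G = fun t =>
          (∑' n : ι, ENNReal.ofReal (w n * Real.exp (-(l * Real.sin (Real.pi * n.val * t) ^ 2)))).toReal := by
        funext t
        rw [← ENNReal.ofReal_tsum_of_nonneg (hGterm_nonneg t) (hGsum t),
          ENNReal.toReal_ofReal (hGnn t)]
      rw [hrepr]
      apply ENNReal.measurable_toReal.comp
      apply Measurable.ennreal_tsum
      intro n
      apply Measurable.ennreal_ofReal
      exact (continuous_const.mul (Real.continuous_exp.comp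
        (((continuous_const.mul ((Real.continuous_sin.comp
          ((continuous_const.mul continuous_id))).pow 2))).neg))).measurable
    have hmeasF : Measurable fun t => (1 + S t) * Real.exp (-(S t)) :=
      (measurable_const.add hmeasS).mul (Real.measurable_exp.comp hmeasS.neg)
    have hFnn : ∀ t, 0 ≤ (1 + S t) * Real.exp (-(S t)) :=
      fun t => mul_nonneg (by linarith [hSnn t]) (Real.exp_nonneg _)
    have hFle1 : ∀ t, (1 + S t) * Real.exp (-(S t)) ≤ 1 := fun t => aux_pt1 (hSnn t)
    haveI hfinm : IsFiniteMeasure (volume.restrict (Ioc (0:ℝ) 1)) := by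
      constructor
      rw [Measure.restrict_apply_univ, Real.volume_Ioc]
      exact ENNReal.ofReal_lt_top
    have hFi : IntervalIntegrable (fun t => (1 + S t) * Real.exp (-(S t))) volume 0 1 := by
      rw [intervalIntegrable_iff_integrableOn_Ioc_of_le zero_le_one]
      refine Integrable.mono' (integrable_const 1) hmeasF.aestronglyMeasurable ?_
      filter_upwards with t
      rw [Real.norm_eq_abs, abs_of_nonneg (hFnn t)]
      exact hFle1 t
    have hGi : IntervalIntegrable (fun t => 2 * G t) volume 0 1 := by
      rw [intervalIntegrable_iff_integrableOn_Ioc_of_le zero_le_one]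
      refine Integrable.mono' (integrable_const 2) ((hmeasG.const_mul 2).aestronglyMeasurable) ?_
      filter_upwards with t
      rw [Real.norm_eq_abs, abs_of_nonneg (by linarith [hGnn t])]
      linarith [hGle1 t]
    have hmono : (∫ t in (0:ℝ)..1, (1 + S t) * Real.exp (-(S t)))
        ≤ ∫ t in (0:ℝ)..1, 2 * G t :=
      intervalIntegral.integral_mono_on zero_le_one hFi hGi (fun t _ => hpt t)
    -- exchange sum and integral
    have hexch : (∫ t in Ioc (0:ℝ) 1,
        ∑' n : ι, w n * Real.exp (-(l * Real.sin (Real.pi * n.val * t) ^ 2)))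
        = ∑' n : ι, ∫ t in Ioc (0:ℝ) 1,
            w n * Real.exp (-(l * Real.sin (Real.pi * n.val * t) ^ 2)) := by
      apply integral_tsum
      · intro n
        exact (continuous_const.mul (Real.continuous_exp.comp
          (((continuous_const.mul ((Real.continuous_sin.comp
            ((continuous_const.mul continuous_id))).pow 2))).neg))).aestronglyMeasurable
      · have hb : ∀ n : ι, (∫⁻ t, ‖w n * Real.exp (-(l * Real.sin (Real.pi * n.val * t) ^ 2))‖₊
            ∂(volume.restrict (Ioc (0:ℝ) 1))) ≤ ENNReal.ofReal (w n) := by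
          intro n
          calc (∫⁻ t, ‖w n * Real.exp (-(l * Real.sin (Real.pi * n.val * t) ^ 2))‖₊
              ∂(volume.restrict (Ioc (0:ℝ) 1)))
              ≤ ∫⁻ _, ENNReal.ofReal (w n) ∂(volume.restrict (Ioc (0:ℝ) 1)) := by
                apply lintegral_mono
                intro t
                dsimp only
                rw [← enorm_eq_nnnorm, ← ofReal_norm]
                apply ENNReal.ofReal_le_ofReal
                rw [Real.norm_eq_abs, abs_of_nonneg (hGterm_nonneg t n)]
                exact hGterm_le t n
          _ = ENNReal.ofReal (w n) := by
                rw [lintegral_const, Measure.restrict_apply_univ, Real.volume_Ioc]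
                norm_num
        apply ne_of_lt
        calc (∑' n : ι, ∫⁻ t, ‖w n * Real.exp (-(l * Real.sin (Real.pi * n.val * t) ^ 2))‖₊
            ∂(volume.restrict (Ioc (0:ℝ) 1)))
            ≤ ∑' n : ι, ENNReal.ofReal (w n) := ENNReal.tsum_le_tsum hb
        _ = ENNReal.ofReal 1 := by rw [← ENNReal.ofReal_tsum_of_nonneg hwnn hws, hw1]
        _ < ⊤ := ENNReal.ofReal_lt_top
    -- per-frequency bound
    have hInn : ∀ n : ι, 0 ≤ ∫ t in Ioc (0:ℝ) 1,
        w n * Real.exp (-(l * Real.sin (Real.pi * n.val * t) ^ 2)) :=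
      fun n => setIntegral_nonneg measurableSet_Ioc (fun t _ => hGterm_nonneg t n)
    have heach : ∀ n : ι, (∫ t in Ioc (0:ℝ) 1,
        w n * Real.exp (-(l * Real.sin (Real.pi * n.val * t) ^ 2)))
        ≤ w n * (2 / Real.sqrt (1 + l)) := by
      intro n
      rw [MeasureTheory.integral_const_mul]
      apply mul_le_mul_of_nonneg_left _ (hwnn n)
      have h1 : (∫ t in Ioc (0:ℝ) 1, Real.exp (-(l * Real.sin (Real.pi * n.val * t) ^ 2)))
          = ∫ t in (0:ℝ)..1, Real.exp (-(l * Real.sin (Real.pi * (n.val:ℝ) * t) ^ 2)) :=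
        (intervalIntegral.integral_of_le zero_le_one).symm
      rw [h1, freq_eq l n.val n.prop]
      exact gauss_bound hlnn
    have hsumI : Summable (fun n : ι => ∫ t in Ioc (0:ℝ) 1,
        w n * Real.exp (-(l * Real.sin (Real.pi * n.val * t) ^ 2))) :=
      Summable.of_nonneg_of_le hInn heach (hws.mul_right _)
    have htsum_le : (∑' n : ι, ∫ t in Ioc (0:ℝ) 1,
        w n * Real.exp (-(l * Real.sin (Real.pi * n.val * t) ^ 2)))
        ≤ 2 / Real.sqrt (1 + l) := by
      calc (∑' n : ι, ∫ t in Ioc (0:ℝ) 1,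
          w n * Real.exp (-(l * Real.sin (Real.pi * n.val * t) ^ 2)))
          ≤ ∑' n : ι, w n * (2 / Real.sqrt (1 + l)) :=
            Summable.tsum_le_tsum heach hsumI (hws.mul_right _)
      _ = 2 / Real.sqrt (1 + l) := by rw [tsum_mul_right, hw1, one_mul]
    -- final arithmetic
    have hb1 : (0:ℝ) < 1 + Bt := by linarith
    have hb2 : (0:ℝ) < 1 + l := by linarith
    have hap := Real.sqrt_pos.2 hb1
    have hbp := Real.sqrt_pos.2 hb2
    have hfin : 2 * (2 / Real.sqrt (1 + l)) ≤ 6 / Real.sqrt (1 + Bt) := by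
      have h16 : (4 * Real.sqrt (1 + Bt))^2 < (6 * Real.sqrt (1 + l))^2 := by
        rw [mul_pow, mul_pow, Real.sq_sqrt hb1.le, Real.sq_sqrt hb2.le, hl]
        nlinarith
      have h4a : 4 * Real.sqrt (1 + Bt) < 6 * Real.sqrt (1 + l) :=
        lt_of_pow_lt_pow_left₀ 2 (by positivity) h16
      rw [show 2 * (2 / Real.sqrt (1 + l)) = 4 / Real.sqrt (1 + l) by ring,
        div_le_div_iff₀ hbp hap]
      linarith
    -- assemble
    show (∫ t in (0:ℝ)..1, (1 + S t) * Real.exp (-(S t))) ≤ 6 / Real.sqrt (1 + Bt)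
    calc (∫ t in (0:ℝ)..1, (1 + S t) * Real.exp (-(S t)))
        ≤ ∫ t in (0:ℝ)..1, 2 * G t := hmono
    _ = 2 * ∫ t in Ioc (0:ℝ) 1, G t := by
        rw [intervalIntegral.integral_const_mul, intervalIntegral.integral_of_le zero_le_one]
    _ = 2 * ∑' n : ι, ∫ t in Ioc (0:ℝ) 1,
          w n * Real.exp (-(l * Real.sin (Real.pi * n.val * t) ^ 2)) := by
        rw [hG]
        exact congrArg (2 * ·) hexch
    _ ≤ 2 * (2 / Real.sqrt (1 + l)) := by linarith [htsum_le]
    _ ≤ 6 / Real.sqrt (1 + Bt) := hfin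
end

section
/- Fix integers r, g ≥ 1. There exist constants K, C > 0 depending only on r and g such that: for every multiplicative function ρ : ℕ → ℝ≥0 satisfying, for all primes p and all integers ν ≥ 1, ρ(p) ≤ p − 1 and ρ(p^ν) ≤ min(g·p^{ν − ν/g}, p^{ν−1}·ρ(p)), and for every positive integer N, one has Σ_{T ≥ 1, rad(T) | N} ρ(T)·τ_r(T)/T ≤ C · (N/φ_ρ(N))^K, where φ_ρ(N) := N·∏_{p | N} (1 − ρ(p)/p). -/
open scoped Classical

/-- The `r`-fold divisor function: the number of ordered `r`-tuples `(d₁, …, d_r)` of positive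
integers with `d₁⋯d_r = T`. -/
noncomputable def taur (r T : ℕ) : ℕ :=
  ((Fintype.piFinset fun _ : Fin r => Finset.Icc 1 T).filter fun d => ∏ i, d i = T).card

/-- `φ_ρ(N) := N · ∏_{p ∣ N} (1 − ρ(p)/p)`. -/
noncomputable def phiRho (ρ : ℕ → ℝ) (N : ℕ) : ℝ :=
  N * ∏ p ∈ N.primeFactors, (1 - ρ p / p)

open Finset in
lemma sum_prod_le (h : ℕ → ℕ → ℝ) (hh : ∀ p ν, 0 ≤ h p ν) (B : ℕ) :
    ∀ (P : Finset ℕ) (S : Finset ℕ) (w : ℕ → ℕ → ℕ),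
    (∀ T ∈ S, ∀ T' ∈ S, (∀ p ∈ P, w T p = w T' p) → T = T') →
    (∀ T ∈ S, ∀ p ∈ P, w T p ≤ B) →
    ∑ T ∈ S, ∏ p ∈ P, h p (w T p) ≤ ∏ p ∈ P, ∑ ν ∈ Finset.range (B+1), h p ν := by
  intro P
  induction P using Finset.induction_on with
  | empty =>
    intro S w hinj _
    simp only [Finset.prod_empty]
    rw [Finset.sum_const, nsmul_eq_mul, mul_one]
    have : S.card ≤ 1 := Finset.card_le_one.mpr (fun a ha b hb => hinj a ha b hb (by simp))
    exact_mod_cast this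
  | @insert a P' ha ih =>
    intro S w hinj hB
    have hR : (0:ℝ) ≤ ∏ p ∈ P', ∑ ν ∈ Finset.range (B+1), h p ν :=
      Finset.prod_nonneg fun p _ => Finset.sum_nonneg fun ν _ => hh p ν
    rw [Finset.prod_insert ha]
    have hmaps : ∀ T ∈ S, w T a ∈ Finset.range (B+1) := fun T hT =>
      Finset.mem_range.mpr (Nat.lt_succ_of_le (hB T hT a (Finset.mem_insert_self a P')))
    calc ∑ T ∈ S, ∏ p ∈ insert a P', h p (w T p)
        = ∑ j ∈ Finset.range (B+1), ∑ T ∈ S.filter (fun T => w T a = j),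
            ∏ p ∈ insert a P', h p (w T p) := (Finset.sum_fiberwise_of_maps_to hmaps _).symm
      _ ≤ ∑ j ∈ Finset.range (B+1), h a j * ∏ p ∈ P', ∑ ν ∈ Finset.range (B+1), h p ν := by
          apply Finset.sum_le_sum
          intro j _
          have : ∑ T ∈ S.filter (fun T => w T a = j), ∏ p ∈ insert a P', h p (w T p)
              = h a j * ∑ T ∈ S.filter (fun T => w T a = j), ∏ p ∈ P', h p (w T p) := by
            rw [Finset.mul_sum]
            apply Finset.sum_congr rfl
            intro T hT
            obtain ⟨hTS, hTj⟩ := Finset.mem_filter.mp hT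
            rw [Finset.prod_insert ha, hTj]
          rw [this]
          apply mul_le_mul_of_nonneg_left _ (hh a j)
          apply ih (S.filter (fun T => w T a = j)) w
          · intro T hT T' hT' hw
            obtain ⟨hTS, hTj⟩ := Finset.mem_filter.mp hT
            obtain ⟨hTS', hTj'⟩ := Finset.mem_filter.mp hT'
            refine hinj T hTS T' hTS' ?_
            intro p hp
            rcases Finset.mem_insert.mp hp with rfl | hp'
            · rw [hTj, hTj']
            · exact hw p hp'
          · intro T hT p hp
            exact hB T (Finset.mem_filter.mp hT).1 p (Finset.mem_insert_of_mem hp)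
      _ = (∑ ν ∈ Finset.range (B+1), h a ν) * ∏ p ∈ P', ∑ ν ∈ Finset.range (B+1), h p ν := by
          rw [← Finset.sum_mul]

lemma taur_le (k T : ℕ) (hT : 0 < T) : taur (k+1) T ≤ T.divisors.card ^ k := by
  unfold taur
  have : T.divisors.card ^ k = (Fintype.piFinset fun _ : Fin k => T.divisors).card := by
    rw [Fintype.card_piFinset]; simp
  rw [this]
  apply Finset.card_le_card_of_injOn (fun d => fun i : Fin k => d i.castSucc)
  · intro d hd
    rw [Finset.mem_coe, Finset.mem_filter] at hd
    obtain ⟨hd1, hd2⟩ := hd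
    rw [Finset.mem_coe, Fintype.mem_piFinset]
    intro i
    rw [Nat.mem_divisors]
    refine ⟨?_, hT.ne'⟩
    rw [← hd2]
    exact Finset.dvd_prod_of_mem d (Finset.mem_univ _)
  · intro d hd e he hde
    rw [Finset.mem_coe, Finset.mem_filter] at hd he
    obtain ⟨hd1, hd2⟩ := hd
    obtain ⟨he1, he2⟩ := he
    have hcast : ∀ i : Fin k, d i.castSucc = e i.castSucc := fun i => congrFun hde i
    have hlast : d (Fin.last k) = e (Fin.last k) := by
      have pd := hd2; have pe := he2
      rw [Fin.prod_univ_castSucc] at pd pe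
      have hprefix : ∏ i : Fin k, d i.castSucc = ∏ i : Fin k, e i.castSucc :=
        Finset.prod_congr rfl (fun i _ => hcast i)
      have hpos : 0 < ∏ i : Fin k, d i.castSucc := by
        apply Finset.prod_pos
        intro i _
        have := Fintype.mem_piFinset.mp hd1 i.castSucc
        exact (Finset.mem_Icc.mp this).1
      apply Nat.eq_of_mul_eq_mul_left hpos
      rw [pd, hprefix, pe]
    funext i
    rcases Fin.eq_castSucc_or_eq_last i with ⟨j, rfl⟩ | rfl
    · exact hcast j
    · exact hlast


lemma prod_fact_ext {M : Type*} [CommMonoid M] (P : Finset ℕ) (T : ℕ)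
    (hsub : T.primeFactors ⊆ P) (F : ℕ → ℕ → M) (hF : ∀ p, F p 0 = 1) :
    T.factorization.prod F = ∏ p ∈ P, F p (T.factorization p) :=
  Finsupp.prod_of_support_subset _ (by rwa [Nat.support_factorization]) F (fun p _ => hF p)

lemma sum_inv_sq_aux : ∀ N : ℕ, 1 ≤ N → ∑ n ∈ Finset.Icc 2 N, (1:ℝ)/(n:ℝ)^2 ≤ 1 - 1/(N:ℝ) := by
  intro N hN
  induction N, hN using Nat.le_induction with
  | base => simp
  | succ N hN ih =>
    rw [Finset.sum_Icc_succ_top (by omega)]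
    have hN0 : (0:ℝ) < (N:ℝ) := by exact_mod_cast hN
    have key : (1:ℝ)/((N:ℝ)+1)^2 ≤ 1/(N:ℝ) - 1/((N:ℝ)+1) := by
      rw [div_sub_div _ _ (ne_of_gt hN0) (by positivity), div_le_div_iff₀ (by positivity) (by positivity)]
      ring_nf
      nlinarith
    push_cast
    linarith

lemma sum_inv_sq_le (N : ℕ) : ∑ n ∈ Finset.Icc 2 N, (1:ℝ)/(n:ℝ)^2 ≤ 1 := by
  rcases Nat.eq_zero_or_pos N with rfl | hN
  · simp
  · have := sum_inv_sq_aux N hN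
    have h2 : (0:ℝ) < 1/(N:ℝ) := by positivity
    linarith

lemma exists_A (k : ℕ) (q : ℝ) (hq0 : 0 < q) (hq1 : q < 1) :
    ∃ A : ℝ, 0 ≤ A ∧ ∀ B, ∑ ν ∈ Finset.range B, ((ν:ℝ)+1)^k * q^ν ≤ A := by
  have h1 : Summable (fun ν : ℕ => ((ν:ℝ))^k * q^ν) :=
    summable_pow_mul_geometric_of_norm_lt_one k (by rwa [Real.norm_eq_abs, abs_of_pos hq0])
  have h2 : Summable (fun ν : ℕ => (((ν+1:ℕ)):ℝ)^k * q^(ν+1)) :=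
    h1.comp_injective (add_left_injective 1)
  have h3 : Summable (fun ν : ℕ => ((ν:ℝ)+1)^k * q^ν) := by
    apply (h2.mul_left q⁻¹).congr
    intro ν
    push_cast
    field_simp
    ring
  refine ⟨∑' ν : ℕ, ((ν:ℝ)+1)^k * q^ν, tsum_nonneg (fun ν => by positivity), fun B => ?_⟩
  exact Summable.sum_le_tsum _ (fun i _ => by positivity) h3


lemma euler_factor (g k : ℕ) (hg : 1 ≤ g) (A : ℝ) (hA0 : 0 ≤ A)
    (hA : ∀ B, ∑ ν ∈ Finset.range B, ((ν:ℝ)+1)^k * ((2:ℝ)^(-(1:ℝ)/(2*(g:ℝ))))^ν ≤ A)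
    (p : ℕ) (hp : 2 ≤ p) (x : ℝ) (hx0 : 0 ≤ x) (hx1 : x ≤ 1 - 1/p)
    (h : ℕ → ℝ) (h0 : h 0 = 1) (hnn : ∀ ν, 0 ≤ h ν)
    (hb1 : ∀ ν : ℕ, 1 ≤ ν → h ν ≤ ((ν:ℝ)+1)^k * ((g:ℝ) * (p:ℝ)^(-(ν:ℝ)/(g:ℝ))))
    (hb2 : ∀ ν : ℕ, 1 ≤ ν → h ν ≤ ((ν:ℝ)+1)^k * x)
    (B : ℕ) :
    ∑ ν ∈ Finset.range (B+1), h ν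
      ≤ (1 + (g:ℝ)*A/(p:ℝ)^2) * ((1-x)⁻¹) ^ ((4*g+1)^(k+1)) := by
  have hgR : (1:ℝ) ≤ (g:ℝ) := by exact_mod_cast hg
  have hg0 : (0:ℝ) < (g:ℝ) := by linarith
  have hpR : (2:ℝ) ≤ (p:ℝ) := by exact_mod_cast hp
  have hp0 : (0:ℝ) < (p:ℝ) := by linarith
  have hp1 : (1:ℝ) ≤ (p:ℝ) := by linarith
  have hp2 : (0:ℝ) < (p:ℝ)^2 := by positivity
  set q : ℝ := (2:ℝ)^(-(1:ℝ)/(2*(g:ℝ))) with hq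
  have hq0 : 0 < q := Real.rpow_pos_of_pos (by norm_num) _
  set M := 4*g with hM
  set K := (4*g+1)^(k+1) with hK
  have hx1' : x < 1 := by
    have : (0:ℝ) < 1/p := by positivity
    linarith
  have h1x : 0 < 1 - x := by linarith
  -- pointwise split
  have key : ∀ i : ℕ, h (i+1) ≤
      (if i < M then ((i:ℝ)+2)^k * x else 0)
      + (if M ≤ i then ((i:ℝ)+2)^k * ((g:ℝ) * (p:ℝ)^(-((i:ℝ)+1)/(g:ℝ))) else 0) := by
    intro i
    rcases lt_or_ge i M with hi | hi
    · rw [if_pos hi, if_neg (not_le.mpr hi), add_zero]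
      have := hb2 (i+1) (by omega)
      push_cast at this ⊢
      have e : ((i:ℝ)+1+1) = (i:ℝ)+2 := by ring
      rw [e] at this
      linarith
    · rw [if_neg (not_lt.mpr hi), if_pos hi, zero_add]
      have := hb1 (i+1) (by omega)
      push_cast at this ⊢
      have e : ((i:ℝ)+1+1) = (i:ℝ)+2 := by ring
      rw [e] at this
      linarith
  -- head bound
  have head : ∑ i ∈ Finset.range B, (if i < M then ((i:ℝ)+2)^k * x else 0)
      ≤ (K:ℝ) * x := by
    rw [← Finset.sum_filter]
    have hsub : (Finset.range B).filter (fun i => i < M) ⊆ Finset.range M := by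
      intro i hi; rw [Finset.mem_range]; exact (Finset.mem_filter.mp hi).2
    calc ∑ i ∈ (Finset.range B).filter (fun i => i < M), ((i:ℝ)+2)^k * x
        ≤ ∑ i ∈ Finset.range M, ((i:ℝ)+2)^k * x :=
          Finset.sum_le_sum_of_subset_of_nonneg hsub (by intro i _ _; positivity)
      _ ≤ ∑ _i ∈ Finset.range M, ((M:ℝ)+1)^k * x := by
          apply Finset.sum_le_sum; intro i hi
          have h1 := Finset.mem_range.mp hi
          have h2 : (i:ℝ) + 1 ≤ (M:ℝ) := by exact_mod_cast h1
          have h3 : (i:ℝ)+2 ≤ (M:ℝ)+1 := by linarith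
          exact mul_le_mul_of_nonneg_right (pow_le_pow_left₀ (by positivity) h3 k) hx0
      _ = (M:ℝ) * (((M:ℝ)+1)^k * x) := by
          rw [Finset.sum_const, Finset.card_range, nsmul_eq_mul]
      _ ≤ (K:ℝ) * x := by
          have hKe : (K:ℝ) = ((M:ℝ)+1)^(k+1) := by rw [hK, hM]; push_cast; ring
          rw [hKe, pow_succ]
          have : (M:ℝ) * ((M:ℝ)+1)^k ≤ ((M:ℝ)+1)^k * ((M:ℝ)+1) := by
            rw [mul_comm]
            exact mul_le_mul_of_nonneg_left (by linarith) (by positivity)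
          nlinarith [pow_nonneg (by positivity : (0:ℝ) ≤ (M:ℝ)+1) k]
  -- tail term bound
  have tailterm : ∀ i : ℕ, M ≤ i →
      ((i:ℝ)+2)^k * ((g:ℝ) * (p:ℝ)^(-((i:ℝ)+1)/(g:ℝ)))
        ≤ (g:ℝ)/(p:ℝ)^2 * (((i:ℝ)+2)^k * q^(i+1)) := by
    intro i hi
    have hiR : (4*(g:ℝ)) ≤ (i:ℝ) := by
      have : (M:ℝ) ≤ (i:ℝ) := by exact_mod_cast hi
      rw [hM] at this; push_cast at this; linarith
    set t : ℝ := (i:ℝ)+1 with ht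
    have ht0 : 0 < t := by positivity
    have h2g : (0:ℝ) < 2*(g:ℝ) := by linarith
    have esplit : -t/(g:ℝ) = -t/(2*(g:ℝ)) + -t/(2*(g:ℝ)) := by field_simp; ring
    have split : (p:ℝ)^(-t/(g:ℝ)) = (p:ℝ)^(-t/(2*(g:ℝ))) * (p:ℝ)^(-t/(2*(g:ℝ))) := by
      rw [esplit, Real.rpow_add hp0]
    have f1 : (p:ℝ)^(-t/(2*(g:ℝ))) ≤ ((p:ℝ)^2)⁻¹ := by
      have e1 : ((p:ℝ)^2)⁻¹ = (p:ℝ)^(-(2:ℝ)) := by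
        rw [Real.rpow_neg hp0.le]
        congr 1
        rw [show (2:ℝ) = ((2:ℕ):ℝ) by norm_num, Real.rpow_natCast]
      rw [e1]
      apply Real.rpow_le_rpow_of_exponent_le hp1
      rw [div_le_iff₀ h2g]
      nlinarith
    have f2 : (p:ℝ)^(-t/(2*(g:ℝ))) ≤ q^(i+1) := by
      have hqν : q^(i+1) = (2:ℝ)^(-t/(2*(g:ℝ))) := by
        rw [hq, ← Real.rpow_natCast ((2:ℝ)^(-(1:ℝ)/(2*(g:ℝ)))) (i+1),
          ← Real.rpow_mul (by norm_num : (0:ℝ) ≤ 2)]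
        congr 1
        rw [ht]
        push_cast
        field_simp
      rw [hqν, neg_div, Real.rpow_neg hp0.le, Real.rpow_neg (by norm_num : (0:ℝ) ≤ 2)]
      have hs0 : 0 ≤ t/(2*(g:ℝ)) := by positivity
      exact inv_anti₀ (Real.rpow_pos_of_pos (by norm_num) _)
        (Real.rpow_le_rpow (by norm_num) hpR hs0)
    have hab : (p:ℝ)^(-t/(2*(g:ℝ))) * (p:ℝ)^(-t/(2*(g:ℝ))) ≤ ((p:ℝ)^2)⁻¹ * q^(i+1) :=
      mul_le_mul f1 f2 (Real.rpow_pos_of_pos hp0 _).le (by positivity)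
    calc ((i:ℝ)+2)^k * ((g:ℝ) * (p:ℝ)^(-t/(g:ℝ)))
        = ((i:ℝ)+2)^k * (g:ℝ) * ((p:ℝ)^(-t/(2*(g:ℝ))) * (p:ℝ)^(-t/(2*(g:ℝ)))) := by
          rw [split]; ring
      _ ≤ ((i:ℝ)+2)^k * (g:ℝ) * (((p:ℝ)^2)⁻¹ * q^(i+1)) := by
          apply mul_le_mul_of_nonneg_left hab (by positivity)
      _ = (g:ℝ)/(p:ℝ)^2 * (((i:ℝ)+2)^k * q^(i+1)) := by ring
  -- tail sum bound
  have tail : ∑ i ∈ Finset.range B,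
      (if M ≤ i then ((i:ℝ)+2)^k * ((g:ℝ) * (p:ℝ)^(-((i:ℝ)+1)/(g:ℝ))) else 0)
      ≤ (g:ℝ)*A/(p:ℝ)^2 := by
    calc ∑ i ∈ Finset.range B,
        (if M ≤ i then ((i:ℝ)+2)^k * ((g:ℝ) * (p:ℝ)^(-((i:ℝ)+1)/(g:ℝ))) else 0)
        ≤ ∑ i ∈ Finset.range B, (g:ℝ)/(p:ℝ)^2 * (((i:ℝ)+2)^k * q^(i+1)) := by
          apply Finset.sum_le_sum; intro i _
          split_ifs with hi
          · exact tailterm i hi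
          · positivity
      _ = (g:ℝ)/(p:ℝ)^2 * ∑ i ∈ Finset.range B, ((i:ℝ)+2)^k * q^(i+1) := by
          rw [Finset.mul_sum]
      _ ≤ (g:ℝ)/(p:ℝ)^2 * A := by
          apply mul_le_mul_of_nonneg_left _ (by positivity)
          have hAB := hA (B+1)
          rw [Finset.sum_range_succ'] at hAB
          have e : ∑ i ∈ Finset.range B, ((i:ℝ)+2)^k * q^(i+1)
              = ∑ i ∈ Finset.range B, (((i+1:ℕ):ℝ)+1)^k * q^(i+1) := by
            apply Finset.sum_congr rfl; intro i _; push_cast; ring_nf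
          rw [e]
          have : ((0:ℕ):ℝ) + 1 = 1 := by norm_num
          simp only [this, one_pow, pow_zero, mul_one] at hAB
          linarith
      _ = (g:ℝ)*A/(p:ℝ)^2 := by ring
  -- combine
  have total : ∑ ν ∈ Finset.range (B+1), h ν ≤ 1 + (K:ℝ)*x + (g:ℝ)*A/(p:ℝ)^2 := by
    rw [Finset.sum_range_succ', h0]
    have : ∑ i ∈ Finset.range B, h (i+1)
        ≤ ∑ i ∈ Finset.range B, ((if i < M then ((i:ℝ)+2)^k * x else 0)
          + (if M ≤ i then ((i:ℝ)+2)^k * ((g:ℝ) * (p:ℝ)^(-((i:ℝ)+1)/(g:ℝ))) else 0)) :=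
      Finset.sum_le_sum (fun i _ => key i)
    rw [Finset.sum_add_distrib] at this
    linarith
  have bern : 1 + (K:ℝ)*x ≤ ((1-x)⁻¹)^K := by
    have b1 : 1 + (K:ℝ)*x ≤ (1+x)^K := one_add_mul_le_pow (by linarith) K
    have b2 : (1+x) ≤ (1-x)⁻¹ := by
      rw [← one_div, le_div_iff₀ h1x]
      nlinarith
    calc 1 + (K:ℝ)*x ≤ (1+x)^K := b1
      _ ≤ ((1-x)⁻¹)^K := pow_le_pow_left₀ (by linarith) b2 K
  have hc : 0 ≤ (g:ℝ)*A/(p:ℝ)^2 := by positivity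
  have hKx0 : 0 ≤ (K:ℝ)*x := by positivity
  calc ∑ ν ∈ Finset.range (B+1), h ν ≤ 1 + (K:ℝ)*x + (g:ℝ)*A/(p:ℝ)^2 := total
    _ ≤ (1 + (g:ℝ)*A/(p:ℝ)^2) * ((1-x)⁻¹)^K := by
        nlinarith [mul_le_mul_of_nonneg_left bern hc]

/-- Fix integers `r, g ≥ 1`. There exist `K, C > 0` depending only on `r, g` such that for
every nonnegative multiplicative `ρ` with `ρ(p) ≤ p − 1` and
`ρ(pᵛ) ≤ min(g·p^{ν − ν/g}, p^{ν−1}·ρ(p))` for all primes `p` and `ν ≥ 1`, and every `N ≥ 1`,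
`∑_{T ≥ 1, rad T ∣ N} ρ(T)·τ_r(T)/T ≤ C · (N/φ_ρ(N))^K`. Since all terms are nonnegative, the
(possibly infinite) sum is bounded by bounding all its finite partial sums. -/
theorem statement9 (r g : ℕ) (hr : 1 ≤ r) (hg : 1 ≤ g) :
    ∃ K C : ℝ, 0 < K ∧ 0 < C ∧
      ∀ ρ : ℕ → ℝ,
        (∀ n, 0 ≤ ρ n) → ρ 1 = 1 →
        (∀ m n : ℕ, Nat.Coprime m n → ρ (m * n) = ρ m * ρ n) →
        (∀ p : ℕ, p.Prime → ρ p ≤ (p : ℝ) - 1) →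
        (∀ p : ℕ, p.Prime → ∀ ν : ℕ, 1 ≤ ν →
          ρ (p ^ ν) ≤
            min ((g : ℝ) * (p : ℝ) ^ ((ν : ℝ) - (ν : ℝ) / g)) ((p : ℝ) ^ (ν - 1) * ρ p)) →
        ∀ N : ℕ, 0 < N →
          ∀ S : Finset ℕ, (∀ T ∈ S, 0 < T ∧ ∀ p : ℕ, p.Prime → p ∣ T → p ∣ N) →
            ∑ T ∈ S, ρ T * (taur r T : ℝ) / T ≤ C * ((N : ℝ) / phiRho ρ N) ^ K := by
  obtain ⟨k, rfl⟩ : ∃ k, r = k + 1 := ⟨r - 1, by omega⟩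
  have hg0 : (0:ℝ) < (g:ℝ) := by exact_mod_cast hg
  set q : ℝ := (2:ℝ)^(-(1:ℝ)/(2*(g:ℝ))) with hqdef
  have hq0 : 0 < q := Real.rpow_pos_of_pos (by norm_num) _
  have hq1 : q < 1 := Real.rpow_lt_one_of_one_lt_of_neg (by norm_num)
    (div_neg_of_neg_of_pos (by norm_num) (by positivity))
  obtain ⟨A, hA0, hA⟩ := exists_A k q hq0 hq1
  set Kn : ℕ := (4*g+1)^(k+1) with hKn
  refine ⟨(Kn:ℝ), Real.exp ((g:ℝ)*A), by positivity, Real.exp_pos _, ?_⟩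
  intro ρ hρ0 hρ1 hmult hρp hρpow N hN S hS
  set P := N.primeFactors with hP
  have hPp : ∀ p ∈ P, p.Prime := fun p hp => Nat.prime_of_mem_primeFactors hp
  set B := S.sup id with hB
  set h : ℕ → ℕ → ℝ := fun p ν => ρ (p^ν) * ((ν:ℝ)+1)^k / (p:ℝ)^ν with hh
  have hhnn : ∀ p ν, 0 ≤ h p ν := fun p ν =>
    div_nonneg (mul_nonneg (hρ0 _) (by positivity)) (by positivity)
  -- reconstruction of T from its factorization over P
  have hTsub : ∀ T ∈ S, T.primeFactors ⊆ P := by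
    intro T hT p hp
    rw [Nat.mem_primeFactors] at hp ⊢
    exact ⟨hp.1, (hS T hT).2 p hp.1 hp.2.1, hN.ne'⟩
  have hrecon : ∀ T ∈ S, T = ∏ p ∈ P, p ^ T.factorization p := by
    intro T hT
    conv_lhs => rw [← Nat.factorization_prod_pow_eq_self (hS T hT).1.ne']
    exact prod_fact_ext P T (hTsub T hT) (fun p ν => p^ν) (fun p => pow_zero p)
  -- Step A : pointwise bound
  have stepA : ∀ T ∈ S, ρ T * (taur (k+1) T : ℝ) / T ≤ ∏ p ∈ P, h p (T.factorization p) := by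
    intro T hT
    have hT0 : 0 < T := (hS T hT).1
    have hT0' : (0:ℝ) < (T:ℝ) := by exact_mod_cast hT0
    have e1 : ρ T = ∏ p ∈ P, ρ (p ^ T.factorization p) := by
      rw [Nat.multiplicative_factorization ρ hmult hρ1 hT0.ne']
      exact prod_fact_ext P T (hTsub T hT) _ (fun p => by rw [pow_zero, hρ1])
    have e2 : (T:ℝ) = ∏ p ∈ P, ((p:ℝ))^(T.factorization p) := by
      conv_lhs => rw [hrecon T hT]
      push_cast
      rfl
    have e3 : ((T.divisors.card : ℕ):ℝ) = ∏ p ∈ P, ((T.factorization p : ℝ) + 1) := by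
      rw [Nat.card_divisors hT0.ne']
      rw [Finset.prod_subset (hTsub T hT) (fun p _ hp => by
        have h0 : T.factorization p = 0 :=
          Finsupp.notMem_support_iff.mp (by rwa [Nat.support_factorization])
        simp [h0])]
      push_cast
      rfl
    have htaur : (taur (k+1) T : ℝ) ≤ ((T.divisors.card:ℕ):ℝ)^k := by
      exact_mod_cast taur_le k T hT0
    calc ρ T * (taur (k+1) T : ℝ) / T ≤ ρ T * ((T.divisors.card:ℕ):ℝ)^k / T := by
          gcongr
          exact hρ0 T
      _ = ∏ p ∈ P, h p (T.factorization p) := by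
          rw [e1, e3, e2, hh]
          rw [← Finset.prod_pow, ← Finset.prod_mul_distrib, ← Finset.prod_div_distrib]
  -- Step B
  have stepB : ∑ T ∈ S, ∏ p ∈ P, h p (T.factorization p)
      ≤ ∏ p ∈ P, ∑ ν ∈ Finset.range (B+1), h p ν := by
    apply sum_prod_le h hhnn B P S (fun T p => T.factorization p)
    · intro T hT T' hT' hw
      rw [hrecon T hT, hrecon T' hT']
      exact Finset.prod_congr rfl (fun p hp => by rw [hw p hp])
    · intro T hT p hp
      calc T.factorization p ≤ T := (Nat.factorization_lt p (hS T hT).1.ne').le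
        _ ≤ B := Finset.le_sup (f := id) hT
  -- Step C : per-prime bound
  have stepC : ∀ p ∈ P, ∑ ν ∈ Finset.range (B+1), h p ν
      ≤ (1 + (g:ℝ)*A/(p:ℝ)^2) * ((1 - ρ p / p)⁻¹) ^ Kn := by
    intro p hpP
    have hp := hPp p hpP
    have hp2 : 2 ≤ p := hp.two_le
    have hp0 : (0:ℝ) < (p:ℝ) := by exact_mod_cast hp.pos
    have hx0 : 0 ≤ ρ p / p := div_nonneg (hρ0 p) hp0.le
    have hx1 : ρ p / p ≤ 1 - 1/(p:ℝ) := by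
      have h1 : ρ p / p ≤ ((p:ℝ)-1)/p := by
        gcongr
        exact hρp p hp
      rw [sub_div, div_self hp0.ne'] at h1
      exact h1
    apply euler_factor g k hg A hA0 hA p hp2 _ hx0 hx1
    · rw [hh]
      simp [hρ1]
    · exact fun ν => hhnn p ν
    · intro ν hν
      have hb := (hρpow p hp ν hν).trans (min_le_left _ _)
      have hsplit : (p:ℝ)^((ν:ℝ) - (ν:ℝ)/g) = (p:ℝ)^ν * (p:ℝ)^(-(ν:ℝ)/(g:ℝ)) := by
        rw [← Real.rpow_natCast (p:ℝ) ν, ← Real.rpow_add hp0]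
        congr 1
        ring
      rw [hh]
      have hpν : (0:ℝ) < (p:ℝ)^ν := by positivity
      calc ρ (p^ν) * ((ν:ℝ)+1)^k / (p:ℝ)^ν
          ≤ ((g:ℝ) * ((p:ℝ)^ν * (p:ℝ)^(-(ν:ℝ)/(g:ℝ)))) * ((ν:ℝ)+1)^k / (p:ℝ)^ν := by
            gcongr
            rw [← hsplit]
            exact hb
        _ = ((ν:ℝ)+1)^k * ((g:ℝ) * (p:ℝ)^(-(ν:ℝ)/(g:ℝ))) := by
            field_simp
    · intro ν hν
      have hb := (hρpow p hp ν hν).trans (min_le_right _ _)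
      rw [hh]
      have hpν1 : (0:ℝ) < (p:ℝ)^(ν-1) := by positivity
      have hpow : (p:ℝ)^ν = (p:ℝ)^(ν-1) * p := by
        rw [← pow_succ]
        congr 1
        omega
      calc ρ (p^ν) * ((ν:ℝ)+1)^k / (p:ℝ)^ν
          ≤ ((p:ℝ)^(ν-1) * ρ p) * ((ν:ℝ)+1)^k / (p:ℝ)^ν := by
            gcongr
        _ = ((ν:ℝ)+1)^k * (ρ p / p) := by
            rw [hpow]
            field_simp
  -- Step D : assemble
  have hprodpos : ∀ p ∈ P, (0:ℝ) < 1 - ρ p / p := by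
    intro p hpP
    have hp := hPp p hpP
    have hp0 : (0:ℝ) < (p:ℝ) := by exact_mod_cast hp.pos
    have hx1 : ρ p / p ≤ 1 - 1/(p:ℝ) := by
      have h1 : ρ p / p ≤ ((p:ℝ)-1)/p := by
        gcongr
        exact hρp p hp
      rw [sub_div, div_self hp0.ne'] at h1
      exact h1
    have : (0:ℝ) < 1/(p:ℝ) := by positivity
    linarith
  have hsub2 : P ⊆ Finset.Icc 2 N := by
    intro p hpP
    rw [Finset.mem_Icc]
    exact ⟨(hPp p hpP).two_le, Nat.le_of_dvd hN (Nat.dvd_of_mem_primeFactors hpP)⟩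
  have hD1 : ∏ p ∈ P, (1 + (g:ℝ)*A/(p:ℝ)^2) ≤ Real.exp ((g:ℝ)*A) := by
    calc ∏ p ∈ P, (1 + (g:ℝ)*A/(p:ℝ)^2)
        ≤ ∏ p ∈ P, Real.exp ((g:ℝ)*A/(p:ℝ)^2) := by
          apply Finset.prod_le_prod
          · intro p hpP
            have : (0:ℝ) ≤ (g:ℝ)*A/(p:ℝ)^2 := by positivity
            linarith
          · intro p hpP
            have := Real.add_one_le_exp ((g:ℝ)*A/(p:ℝ)^2)
            linarith
      _ = Real.exp (∑ p ∈ P, (g:ℝ)*A/(p:ℝ)^2) := (Real.exp_sum _ _).symm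
      _ ≤ Real.exp ((g:ℝ)*A) := by
          apply Real.exp_le_exp.mpr
          have e : ∑ p ∈ P, (g:ℝ)*A/(p:ℝ)^2 = (g:ℝ)*A * ∑ p ∈ P, (1:ℝ)/(p:ℝ)^2 := by
            rw [Finset.mul_sum]
            exact Finset.sum_congr rfl (fun p _ => by ring)
          rw [e]
          have hs : ∑ p ∈ P, (1:ℝ)/(p:ℝ)^2 ≤ 1 := by
            calc ∑ p ∈ P, (1:ℝ)/(p:ℝ)^2 ≤ ∑ n ∈ Finset.Icc 2 N, (1:ℝ)/(n:ℝ)^2 :=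
                  Finset.sum_le_sum_of_subset_of_nonneg hsub2 (fun n _ _ => by positivity)
              _ ≤ 1 := sum_inv_sq_le N
          nlinarith [mul_nonneg hg0.le hA0]
  have hφ0 : (0:ℝ) < ∏ p ∈ P, (1 - ρ p / p) := Finset.prod_pos hprodpos
  have hN0 : ((N:ℝ)) ≠ 0 := by
    have : (0:ℝ) < (N:ℝ) := by exact_mod_cast hN
    exact this.ne'
  have hphi : ((N:ℝ)) / phiRho ρ N = ∏ p ∈ P, (1 - ρ p / p)⁻¹ := by
    rw [phiRho, ← hP, Finset.prod_inv_distrib, div_mul_eq_div_div, div_self hN0, one_div]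
  calc ∑ T ∈ S, ρ T * (taur (k+1) T : ℝ) / T
      ≤ ∑ T ∈ S, ∏ p ∈ P, h p (T.factorization p) := Finset.sum_le_sum stepA
    _ ≤ ∏ p ∈ P, ∑ ν ∈ Finset.range (B+1), h p ν := stepB
    _ ≤ ∏ p ∈ P, ((1 + (g:ℝ)*A/(p:ℝ)^2) * ((1 - ρ p / p)⁻¹) ^ Kn) := by
        apply Finset.prod_le_prod
        · intro p hpP
          exact Finset.sum_nonneg fun ν _ => hhnn p ν
        · exact stepC
    _ = (∏ p ∈ P, (1 + (g:ℝ)*A/(p:ℝ)^2)) * (∏ p ∈ P, (1 - ρ p / p)⁻¹) ^ Kn := by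
        rw [Finset.prod_mul_distrib, Finset.prod_pow]
    _ ≤ Real.exp ((g:ℝ)*A) * ((N:ℝ) / phiRho ρ N) ^ ((Kn:ℕ):ℝ) := by
        rw [hphi, Real.rpow_natCast]
        apply mul_le_mul_of_nonneg_right hD1
        apply pow_nonneg
        exact Finset.prod_nonneg fun p hpP => inv_nonneg.mpr (hprodpos p hpP).le
end

section
/- Fix integers r, g ≥ 1 and reals 0 < ε, δ < 1. There exist constants c₀, C > 0 depending only on r, g, ε, δ such that the following holds. Let Q₁, …, Q_r ∈ ℤ[X] be irreducible polynomials, pairwise coprime, such that Q := ∏_{j=1}^r Q_j has degree g and no fixed prime divisor. Then for all x ≥ c₀·‖Q‖^δ and x^ε < y ≤ x, Σ_{p ≤ x^{ε/(6g)}} #{n ∈ ℤ : x < n ≤ x + y, Q(n) ≠ 0, and p^{v_p(Q(n))} > x^{ε/3}} ≤ C·y/x^{ε/(6g)}, where the outer sum is over primes p and v_p denotes the p-adic valuation. -/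
open scoped Classical
open Polynomial

/-- The finset of primes `p ≤ x` for a real `x`. -/
noncomputable def primesBelow (x : ℝ) : Finset ℕ :=
  (Finset.range (⌊x⌋₊ + 1)).filter Nat.Prime

noncomputable def rho (Q : Polynomial ℤ) (m : ℕ) : ℕ :=
  ((Finset.range m).filter fun n => (m : ℤ) ∣ Q.eval (n : ℤ)).card

noncomputable def polyNorm (Q : Polynomial ℤ) : ℝ :=
  ((Q.support.sup fun i => (Q.coeff i).natAbs : ℕ) : ℝ)

/-- valuation splitting: if `p^k ∣ a*b` and `p^m ∤ a` then `p^(k-(m-1)) ∣ b`. -/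
lemma val_split {p : ℕ} (hp : p.Prime) {a b : ℤ} {k m : ℕ} (hm : 1 ≤ m)
    (h : ((p : ℕ) : ℤ) ^ k ∣ a * b) (ha : ¬ (((p : ℕ) : ℤ) ^ m ∣ a)) :
    ((p : ℕ) : ℤ) ^ (k - (m - 1)) ∣ b := by
  haveI : Fact p.Prime := ⟨hp⟩
  rcases eq_or_ne b 0 with rfl | hb
  · simp
  have ha0 : a ≠ 0 := by rintro rfl; exact ha (dvd_zero _)
  have hk : k ≤ padicValInt p a + padicValInt p b := by
    rcases (padicValInt_dvd_iff k (a * b)).mp h with h0 | hle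
    · exact absurd h0 (mul_ne_zero ha0 hb)
    · rwa [padicValInt.mul ha0 hb] at hle
  have hva : padicValInt p a ≤ m - 1 := by
    by_contra hcon
    push_neg at hcon
    exact ha ((pow_dvd_pow _ (by omega)).trans
      ((padicValInt_dvd_iff (padicValInt p a) a).mpr (Or.inr le_rfl)))
  have hle : k - (m - 1) ≤ padicValInt p b := by omega
  exact (pow_dvd_pow _ hle).trans ((padicValInt_dvd_iff _ b).mpr (Or.inr le_rfl))

/-- Key clustering lemma: if `Q` has a coefficient not divisible by `p`, has degree ≤ d,
and `d+1` integers pairwise incongruent mod `p^m` all satisfy `p^k ∣ Q(nᵢ)`,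
then `k ≤ d*(m-1)`. -/
lemma key_lemma (p : ℕ) (hp : p.Prime) (m : ℕ) (hm : 1 ≤ m) :
    ∀ d : ℕ, ∀ Q : Polynomial ℤ, Q.natDegree ≤ d → ¬ (Polynomial.C ((p : ℕ) : ℤ) ∣ Q) →
    ∀ k : ℕ, ∀ n : Fin (d + 1) → ℤ,
      (∀ i, ((p : ℕ) : ℤ) ^ k ∣ Q.eval (n i)) →
      (∀ i j, i ≠ j → ¬ (((p : ℕ) : ℤ) ^ m ∣ (n i - n j))) →
      k ≤ d * (m - 1) := by
  intro d
  induction d with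
  | zero =>
    intro Q hdeg hprim k n hdvd _
    by_contra hcon
    push_neg at hcon
    have hk1 : 1 ≤ k := by omega
    apply hprim
    rw [Polynomial.C_dvd_iff_dvd_coeff]
    intro i
    rcases eq_or_ne i 0 with rfl | hi
    · have hQC : Q = Polynomial.C (Q.coeff 0) := Polynomial.eq_C_of_natDegree_le_zero hdeg
      have h1 : ((p : ℕ) : ℤ) ∣ Q.eval (n 0) :=
        (dvd_pow_self _ (by omega : k ≠ 0)).trans (hdvd 0)
      rw [hQC] at h1
      simpa using h1
    · have : Q.coeff i = 0 := by
        apply Polynomial.coeff_eq_zero_of_natDegree_lt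
        omega
      simp [this]
  | succ d ih =>
    intro Q hdeg hprim k n hdvd hsep
    rcases Nat.eq_zero_or_pos k with rfl | hk1
    · omega
    obtain ⟨R, hR⟩ := Polynomial.X_sub_C_dvd_sub_C_eval (a := n 0) (p := Q)
    -- hR : Q - C (Q.eval (n 0)) = (X - C (n 0)) * R
    have hpe : ((p : ℕ) : ℤ) ∣ Polynomial.eval (n 0) Q :=
      (dvd_pow_self _ (by omega : k ≠ 0)).trans (hdvd 0)
    have hprimR : ¬ (Polynomial.C ((p : ℕ) : ℤ) ∣ R) := by
      intro hCp
      apply hprim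
      rw [Polynomial.C_dvd_iff_dvd_coeff]
      intro i
      have hQ : Q = Polynomial.C (Polynomial.eval (n 0) Q) + (X - Polynomial.C (n 0)) * R := by
        rw [← hR]; ring
      have h1 : ((p : ℕ) : ℤ) ∣ ((X - Polynomial.C (n 0)) * R).coeff i :=
        (Polynomial.C_dvd_iff_dvd_coeff _ _).mp (hCp.mul_left _) i
      have h2 : ((p : ℕ) : ℤ) ∣ (Polynomial.C (Polynomial.eval (n 0) Q)).coeff i := by
        rw [Polynomial.coeff_C]
        split
        · exact hpe
        · exact dvd_zero _
      rw [hQ, Polynomial.coeff_add]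
      exact dvd_add h2 h1
    have hRne : R ≠ 0 := by
      rintro rfl
      exact hprimR (dvd_zero _)
    have hdegR : R.natDegree ≤ d := by
      have h1 : ((X - Polynomial.C (n 0)) * R).natDegree = 1 + R.natDegree := by
        rw [Polynomial.natDegree_mul (Polynomial.X_sub_C_ne_zero (n 0)) hRne,
          Polynomial.natDegree_X_sub_C]
      have h2 : (Q - Polynomial.C (Polynomial.eval (n 0) Q)).natDegree ≤ d + 1 := by
        refine le_trans (Polynomial.natDegree_sub_le _ _) ?_
        simp [hdeg, Polynomial.natDegree_C]
      rw [hR, h1] at h2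
      omega
    have hdvdR : ∀ i : Fin (d + 1), ((p : ℕ) : ℤ) ^ (k - (m - 1)) ∣ R.eval (n i.succ) := by
      intro i
      have h3 : Polynomial.eval (n i.succ) Q - Polynomial.eval (n 0) Q
          = (n i.succ - n 0) * R.eval (n i.succ) := by
        have := congrArg (Polynomial.eval (n i.succ)) hR
        simpa using this
      have hia : ((p : ℕ) : ℤ) ^ k ∣ (n i.succ - n 0) * R.eval (n i.succ) := by
        rw [← h3]
        exact dvd_sub (hdvd i.succ) (hdvd 0)
      exact val_split hp hm hia (hsep i.succ 0 (Fin.succ_ne_zero i))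
    have hmain := ih R hdegR hprimR (k - (m - 1)) (fun i => n i.succ) hdvdR
      (fun i j hij => hsep i.succ j.succ (fun h => hij (Fin.succ_injective _ h)))
    have : (d + 1) * (m - 1) = d * (m - 1) + (m - 1) := by ring
    omega


lemma per_prime (g : ℕ) (ε x y X : ℝ) (Q : Polynomial ℤ) (hg : 1 ≤ g)
    (hε : 0 < ε) (hx1 : 1 ≤ x) (hy0 : 0 < y)
    (hdeg : Q.natDegree = g)
    (hrho : ∀ p : ℕ, p.Prime → rho Q p < p)
    (hX0 : 0 < X) (hXg : X ^ g = x ^ (ε / 3))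
    (p : ℕ) (hp : p.Prime) :
    (({n : ℤ | x < (n : ℝ) ∧ (n : ℝ) ≤ x + y ∧ Q.eval n ≠ 0 ∧
        x ^ (ε / 3) < ((p : ℝ) ^ padicValInt p (Q.eval n))}).ncard : ℝ)
      ≤ (g : ℝ) * (y / X + 2) := by
  haveI : Fact p.Prime := ⟨hp⟩
  have hx0 : (0:ℝ) < x := lt_of_lt_of_le one_pos hx1
  have hp1R : (1 : ℝ) < (p : ℝ) := by exact_mod_cast hp.one_lt
  have hp0R : (0 : ℝ) < (p : ℝ) := lt_trans one_pos hp1R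
  have hxε3 : (1 : ℝ) ≤ x ^ (ε / 3) := Real.one_le_rpow hx1 (by positivity)
  set t := Real.logb p (x ^ (ε / 3)) with ht
  have ht0 : 0 ≤ t := Real.logb_nonneg hp1R hxε3
  set k := ⌊t⌋₊ + 1 with hk
  set mm := (k - 1) / g + 1 with hmm
  have hmm1 : 1 ≤ mm := Nat.le_add_left 1 _
  have hkm : g * (mm - 1) < k := by
    have h1 : (k - 1) / g * g ≤ k - 1 := Nat.div_mul_le_self _ _
    have h2 : mm - 1 = (k - 1) / g := by omega
    have h3 : g * (mm - 1) = (k - 1) / g * g := by rw [h2]; ring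
    omega
  have hkmg : k ≤ mm * g := by
    have g0 : 0 < g := hg
    have hdm := Nat.div_add_mod (k - 1) g
    have hml := Nat.mod_lt (k - 1) g0
    have h4 : mm * g = g * ((k - 1) / g) + g := by rw [hmm]; ring
    -- k - 1 = g * q + r with r < g  ⇒  k ≤ g*q + g
    have h5 : k - 1 < g * ((k - 1) / g) + g := by omega
    omega
  have hk_real : x ^ (ε / 3) < (p : ℝ) ^ k := by
    have h1 : t < (k : ℝ) := by
      rw [hk]
      push_cast
      exact Nat.lt_floor_add_one t
    calc x ^ (ε / 3) = (p : ℝ) ^ t := (Real.rpow_logb hp0R (ne_of_gt hp1R) (by positivity)).symm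
      _ < (p : ℝ) ^ (k : ℝ) := (Real.rpow_lt_rpow_left_iff hp1R).mpr h1
      _ = (p : ℝ) ^ k := Real.rpow_natCast _ k
  have hMX : X < (p : ℝ) ^ mm := by
    have h1 : X ^ g < ((p : ℝ) ^ mm) ^ g := by
      rw [hXg]
      calc x ^ (ε / 3) < (p : ℝ) ^ k := hk_real
        _ ≤ (p : ℝ) ^ (mm * g) := pow_le_pow_right₀ hp1R.le hkmg
        _ = ((p : ℝ) ^ mm) ^ g := by rw [pow_mul]
    exact lt_of_pow_lt_pow_left₀ g (by positivity) h1
  -- finset description of the set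
  set a : ℤ := ⌊x⌋ + 1 with ha
  set b : ℤ := ⌊x + y⌋ with hb
  set M : ℤ := ((p : ℕ) : ℤ) ^ mm with hM
  have hMpos : (0 : ℤ) < M := by
    rw [hM]
    exact pow_pos (by exact_mod_cast hp.pos) _
  have hMR : ((M : ℤ) : ℝ) = (p : ℝ) ^ mm := by
    rw [hM]
    push_cast
    ring
  set T := (Finset.Icc a b).filter (fun n : ℤ => Q.eval n ≠ 0 ∧
      x ^ (ε / 3) < ((p : ℝ) ^ padicValInt p (Q.eval n))) with hT
  have hset : {n : ℤ | x < (n : ℝ) ∧ (n : ℝ) ≤ x + y ∧ Q.eval n ≠ 0 ∧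
      x ^ (ε / 3) < ((p : ℝ) ^ padicValInt p (Q.eval n))} = ↑T := by
    ext n
    simp only [hT, Finset.coe_filter, Set.mem_setOf_eq, Finset.mem_Icc]
    constructor
    · rintro ⟨h1, h2, h3, h4⟩
      refine ⟨⟨?_, ?_⟩, h3, h4⟩
      · rw [ha, Int.add_one_le_iff, Int.floor_lt]; exact h1
      · rw [hb, Int.le_floor]; exact h2
    · rintro ⟨⟨h1, h2⟩, h3, h4⟩
      refine ⟨?_, ?_, h3, h4⟩
      · rw [ha, Int.add_one_le_iff, Int.floor_lt] at h1; exact h1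
      · rw [hb, Int.le_floor] at h2; exact h2
  rw [hset, Set.ncard_coe_finset]
  -- members have high divisibility
  have hTdvd : ∀ n ∈ T, ((p : ℕ) : ℤ) ^ k ∣ Q.eval n := by
    intro n hn
    obtain ⟨-, hne, hlt⟩ := Finset.mem_filter.mp hn
    set v := padicValInt p (Q.eval n) with hv
    have hvk : k ≤ v := by
      have h2 : t < (v : ℝ) := by
        have h3 : x ^ (ε / 3) < (p : ℝ) ^ ((v : ℕ) : ℝ) := by
          rw [Real.rpow_natCast]; exact hlt
        calc t < Real.logb p ((p : ℝ) ^ ((v : ℕ) : ℝ)) :=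
              Real.logb_lt_logb hp1R (by positivity) h3
          _ = v := Real.logb_rpow hp0R (ne_of_gt hp1R)
      have h4 : ⌊t⌋₊ < v := (Nat.floor_lt ht0).mpr h2
      omega
    exact (pow_dvd_pow _ hvk).trans ((padicValInt_dvd_iff v _).mpr (Or.inr le_rfl))
  -- primitivity of Q w.r.t. p
  have hprim : ¬ (Polynomial.C ((p : ℕ) : ℤ) ∣ Q) := by
    intro hdvd
    have hall : rho Q p = p := by
      unfold rho
      have hmem : ∀ n : ℤ, ((p : ℕ) : ℤ) ∣ Q.eval n := by
        intro n
        have h1 := Polynomial.eval_dvd (x := n) hdvd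
        simpa using h1
      rw [Finset.filter_true_of_mem (fun n _ => hmem n)]
      simp
      convert (Finset.card_image_of_injective (Finset.range p)
        (Nat.cast_injective (R := ℤ))).trans (Finset.card_range p) using 2
      ext z
      simp
    have := hrho p hp
    omega
  -- image of residues has at most g elements
  set I := T.image (fun n => n % M) with hI
  have hIcard : I.card ≤ g := by
    by_contra hcon
    push_neg at hcon
    obtain ⟨J, hJI, hJcard⟩ := Finset.exists_subset_card_eq hcon
    have hchoice : ∀ rr ∈ J, ∃ nn ∈ T, nn % M = rr := by
      intro rr hrr
      have := hJI hrr
      rw [hI, Finset.mem_image] at this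
      exact this
    let e : Fin (g + 1) → {z // z ∈ J} := fun i => J.equivFin.symm (Fin.cast hJcard.symm i)
    have he : Function.Injective e := by
      intro i j hij
      have := J.equivFin.symm.injective hij
      exact Fin.cast_injective _ this
    let N : Fin (g + 1) → ℤ := fun i => (hchoice _ (e i).2).choose
    have hNmem : ∀ i, N i ∈ T := fun i => (hchoice _ (e i).2).choose_spec.1
    have hNmod : ∀ i, (N i) % M = ((e i : ℤ)) := fun i => (hchoice _ (e i).2).choose_spec.2
    have hsep : ∀ i j, i ≠ j → ¬ (((p : ℕ) : ℤ) ^ mm ∣ (N i - N j)) := by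
      intro i j hij hdvd
      have h1 : (N i) % M = (N j) % M :=
        Int.emod_eq_emod_iff_emod_sub_eq_zero.mpr (Int.emod_eq_zero_of_dvd (by rwa [← hM] at hdvd))
      rw [hNmod i, hNmod j] at h1
      exact hij (he (Subtype.ext h1))
    have hkey := key_lemma p hp mm hmm1 g Q (le_of_eq hdeg) hprim k N
      (fun i => hTdvd _ (hNmem i)) hsep
    omega
  -- fiber bound
  have hfib : ∀ rr ∈ I, ((T.filter fun n => n % M = rr).card : ℝ) ≤ y / X + 2 := by
    intro rr hrr
    have hinj : (T.filter fun n => n % M = rr).card ≤ (Finset.Icc (a / M) (b / M)).card := by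
      apply Finset.card_le_card_of_injOn (fun n => n / M)
      · intro n hn
        have hn1 := Finset.mem_filter.mp hn
        have hIcc := (Finset.mem_filter.mp hn1.1).1
        show n / M ∈ Finset.Icc (a / M) (b / M)
        rw [Finset.mem_Icc] at hIcc ⊢
        exact ⟨Int.ediv_le_ediv hMpos hIcc.1, Int.ediv_le_ediv hMpos hIcc.2⟩
      · intro n1 h1 n2 h2 hdiv
        have hm1 : n1 % M = rr := (Finset.mem_filter.mp (Finset.mem_coe.mp h1)).2
        have hm2 : n2 % M = rr := (Finset.mem_filter.mp (Finset.mem_coe.mp h2)).2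
        have e1 := Int.mul_ediv_add_emod n1 M
        have e2 := Int.mul_ediv_add_emod n2 M
        simp only at hdiv
        calc n1 = M * (n1 / M) + n1 % M := e1.symm
          _ = M * (n2 / M) + n2 % M := by rw [hdiv, hm1, hm2]
          _ = n2 := e2
    have hcard : (Finset.Icc (a / M) (b / M)).card = (b / M + 1 - a / M).toNat :=
      Int.card_Icc _ _
    have hbM : ((b / M : ℤ) : ℝ) ≤ (b : ℝ) / (M : ℝ) := by
      rw [le_div_iff₀ (by exact_mod_cast hMpos)]
      have h2 := Int.mul_ediv_add_emod b M
      have h3 := Int.emod_nonneg b (ne_of_gt hMpos)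
      have h4 : (b / M) * M ≤ b := by linarith
      exact_mod_cast h4
    have haM : (a : ℝ) / (M : ℝ) - 1 ≤ ((a / M : ℤ) : ℝ) := by
      have h2 := Int.lt_ediv_add_one_mul_self a hMpos
      have h3 : (a : ℝ) < (((a / M : ℤ) : ℝ) + 1) * (M : ℝ) := by exact_mod_cast h2
      have hMR0 : (0:ℝ) < (M : ℝ) := by exact_mod_cast hMpos
      have h5 : (a : ℝ) / (M : ℝ) < ((a / M : ℤ) : ℝ) + 1 := (div_lt_iff₀ hMR0).mpr h3
      linarith
    have htn : ((b / M + 1 - a / M).toNat : ℝ) ≤ y / X + 2 := by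
      have hRHS0 : (0:ℝ) ≤ y / X + 2 := by positivity
      rcases le_or_gt (b / M + 1 - a / M) 0 with hz | hz
      · rw [Int.toNat_of_nonpos hz]
        simpa using hRHS0
      · have h6 : ((b / M + 1 - a / M).toNat : ℤ) = b / M + 1 - a / M := Int.toNat_of_nonneg hz.le
        have hcast : ((b / M + 1 - a / M).toNat : ℝ) = ((b / M : ℤ) : ℝ) + 1 - ((a / M : ℤ) : ℝ) := by
          calc ((b / M + 1 - a / M).toNat : ℝ)
              = (((b / M + 1 - a / M).toNat : ℤ) : ℝ) := by push_cast; ring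
            _ = ((b / M + 1 - a / M : ℤ) : ℝ) := by rw [h6]
            _ = ((b / M : ℤ) : ℝ) + 1 - ((a / M : ℤ) : ℝ) := by push_cast; ring
        rw [hcast]
        have hba : (b : ℝ) - (a : ℝ) ≤ y := by
          have hbf : ((b : ℤ) : ℝ) ≤ x + y := by rw [hb]; exact_mod_cast Int.floor_le _
          have haf : x < ((a : ℤ) : ℝ) := by
            rw [ha]; push_cast; linarith [Int.lt_floor_add_one x]
          linarith
        have hMR0 : (0:ℝ) < (M : ℝ) := by exact_mod_cast hMpos
        have hMRX : X ≤ (M : ℝ) := by rw [hMR]; exact_mod_cast hMX.le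
        have hdiv1 : ((b : ℝ) - (a : ℝ)) / (M : ℝ) ≤ y / (M : ℝ) := by gcongr
        have hdiv2 : y / (M : ℝ) ≤ y / X := by gcongr
        have hsplit : ((b : ℝ) - (a : ℝ)) / (M : ℝ) = (b : ℝ) / (M : ℝ) - (a : ℝ) / (M : ℝ) := by
          ring
        linarith
    calc ((T.filter fun n => n % M = rr).card : ℝ)
        ≤ ((Finset.Icc (a / M) (b / M)).card : ℝ) := by exact_mod_cast hinj
      _ = ((b / M + 1 - a / M).toNat : ℝ) := by rw [hcard]
      _ ≤ y / X + 2 := htn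
  -- combine
  have hsum : (T.card : ℝ) ≤ (I.card : ℝ) * (y / X + 2) := by
    have h0 : T.card = ∑ rr ∈ I, (T.filter fun n => n % M = rr).card := by
      rw [hI]
      exact Finset.card_eq_sum_card_image _ _
    calc (T.card : ℝ) = ∑ rr ∈ I, ((T.filter fun n => n % M = rr).card : ℝ) := by
          rw [h0]; push_cast; ring
      _ ≤ ∑ rr ∈ I, (y / X + 2) := Finset.sum_le_sum hfib
      _ = (I.card : ℝ) * (y / X + 2) := by rw [Finset.sum_const, nsmul_eq_mul]
  calc (T.card : ℝ) ≤ (I.card : ℝ) * (y / X + 2) := hsum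
    _ ≤ (g : ℝ) * (y / X + 2) := by
        apply mul_le_mul_of_nonneg_right
        · exact_mod_cast hIcard
        · positivity

/-- Fix `r, g ≥ 1` and `0 < ε, δ < 1`. There are constants `c₀, C > 0` depending only on
`r, g, ε, δ` such that for all irreducible pairwise coprime `Q₁, …, Q_r ∈ ℤ[X]` whose product
`Q` has degree `g` and no fixed prime divisor, and all `x ≥ c₀‖Q‖^δ` and `x^ε < y ≤ x`,
`∑_{p ≤ x^{ε/(6g)}} #{x < n ≤ x + y : Q(n) ≠ 0, p^{v_p(Q(n))} > x^{ε/3}} ≤ C·y/x^{ε/(6g)}`. -/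
theorem statement12 (r g : ℕ) (ε δ : ℝ) (hr : 1 ≤ r) (hg : 1 ≤ g)
    (hε : 0 < ε) (hε1 : ε < 1) (hδ : 0 < δ) (hδ1 : δ < 1) :
    ∃ c₀ C : ℝ, 0 < c₀ ∧ 0 < C ∧
      ∀ Qs : Fin r → Polynomial ℤ,
        (∀ j, Irreducible (Qs j)) →
        (∀ i j, i ≠ j → IsRelPrime (Qs i) (Qs j)) →
        (∏ j, Qs j).natDegree = g →
        (∀ p : ℕ, p.Prime → rho (∏ j, Qs j) p < p) →
        ∀ x y : ℝ, c₀ * polyNorm (∏ j, Qs j) ^ δ ≤ x → x ^ ε < y → y ≤ x →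
          ∑ p ∈ primesBelow (x ^ (ε / (6 * g))),
            (({n : ℤ | x < (n : ℝ) ∧ (n : ℝ) ≤ x + y ∧ (∏ j, Qs j).eval n ≠ 0 ∧
                x ^ (ε / 3) < ((p : ℝ) ^ padicValInt p ((∏ j, Qs j).eval n))}).ncard : ℝ) ≤
            C * y / x ^ (ε / (6 * g)) := by
  have hgR : (1 : ℝ) ≤ (g : ℝ) := by exact_mod_cast hg
  have hg0R : (0 : ℝ) < (g : ℝ) := by linarith
  refine ⟨1, 10 * g, one_pos, by positivity, ?_⟩
  intro Qs hirr hcop hdeg hrho x y hx hxy hyx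
  set Q := ∏ j, Qs j with hQdef
  have hQne : Q ≠ 0 := Finset.prod_ne_zero_iff.mpr fun j _ => (hirr j).ne_zero
  have hnorm1 : (1 : ℝ) ≤ polyNorm Q := by
    unfold polyNorm
    have hmem := Polynomial.natDegree_mem_support_of_nonzero hQne
    have h1 : 1 ≤ (Q.coeff Q.natDegree).natAbs :=
      Int.natAbs_pos.mpr (Polynomial.mem_support_iff.mp hmem)
    have h2 := Finset.le_sup (f := fun i => (Q.coeff i).natAbs) hmem
    exact_mod_cast le_trans h1 h2
  have hx1 : (1 : ℝ) ≤ x := by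
    have := Real.one_le_rpow hnorm1 hδ.le
    nlinarith
  have hx0 : (0 : ℝ) < x := lt_of_lt_of_le one_pos hx1
  set P := x ^ (ε / (6 * (g : ℝ))) with hP
  have hP1 : 1 ≤ P := Real.one_le_rpow hx1 (by positivity)
  have hP0 : 0 < P := lt_of_lt_of_le one_pos hP1
  set X := x ^ (ε / (3 * (g : ℝ))) with hX
  have hX1 : 1 ≤ X := Real.one_le_rpow hx1 (by positivity)
  have hX0 : 0 < X := lt_of_lt_of_le one_pos hX1
  have hy0 : 0 < y := by
    have : (1:ℝ) ≤ x ^ ε := Real.one_le_rpow hx1 hε.le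
    linarith
  have hPPX : P * P = X := by
    rw [hP, hX, ← Real.rpow_add hx0]
    congr 1
    have : (g : ℝ) ≠ 0 := ne_of_gt hg0R
    field_simp
    ring
  have hXg : X ^ g = x ^ (ε / 3) := by
    rw [hX, ← Real.rpow_natCast (x ^ (ε / (3 * (g : ℝ)))) g, ← Real.rpow_mul hx0.le]
    congr 1
    have : (g : ℝ) ≠ 0 := ne_of_gt hg0R
    field_simp
  have hXy : X ≤ y := by
    refine le_trans ?_ hxy.le
    apply Real.rpow_le_rpow_of_exponent_le hx1
    rw [div_le_iff₀ (by positivity)]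
    nlinarith
  -- per-prime bound
  have hper : ∀ p ∈ primesBelow P,
      (({n : ℤ | x < (n : ℝ) ∧ (n : ℝ) ≤ x + y ∧ Q.eval n ≠ 0 ∧
          x ^ (ε / 3) < ((p : ℝ) ^ padicValInt p (Q.eval n))}).ncard : ℝ)
        ≤ (g : ℝ) * (y / X + 2) := by
    intro p hpmem
    have hp : p.Prime := by
      unfold primesBelow at hpmem
      exact (Finset.mem_filter.mp hpmem).2
    exact per_prime g ε x y X Q hg hε hx1 hy0 hdeg hrho hX0 hXg p hp
  have hcard : ((primesBelow P).card : ℝ) ≤ 2 * P := by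
    have h1 : (primesBelow P).card ≤ ⌊P⌋₊ + 1 := by
      unfold primesBelow
      exact le_trans (Finset.card_filter_le _ _) (by simp)
    have h2 : ((⌊P⌋₊ : ℝ)) ≤ P := Nat.floor_le hP0.le
    have := (Nat.cast_le (α := ℝ)).mpr h1
    push_cast at this
    linarith
  calc ∑ p ∈ primesBelow P,
      (({n : ℤ | x < (n : ℝ) ∧ (n : ℝ) ≤ x + y ∧ Q.eval n ≠ 0 ∧
          x ^ (ε / 3) < ((p : ℝ) ^ padicValInt p (Q.eval n))}).ncard : ℝ)
      ≤ (primesBelow P).card • ((g : ℝ) * (y / X + 2)) :=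
        Finset.sum_le_card_nsmul _ _ _ hper
    _ = ((primesBelow P).card : ℝ) * ((g : ℝ) * (y / X + 2)) := by
        rw [nsmul_eq_mul]
    _ ≤ (2 * P) * ((g : ℝ) * (y / X + 2)) := by
        apply mul_le_mul_of_nonneg_right hcard
        positivity
    _ ≤ (10 * g) * y / P := by
        rw [← hPPX]
        have e1 : (2 * P) * ((g : ℝ) * (y / (P * P) + 2)) = 2 * g * (y / P) + 4 * g * P := by
          field_simp
          ring
        rw [e1]
        have hPy : P ≤ y / P := by
          rw [le_div_iff₀ hP0]
          nlinarith [hPPX, hXy]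
        have hyP0 : 0 ≤ y / P := by positivity
        have : (10 : ℝ) * g * y / P = 10 * g * (y / P) := by ring
        rw [this]
        nlinarith
end
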